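/- Let (ηₙ) be a sequence of strictly positive reals with ηₙ → 0, and let (zₙ) be a sequence of nonzero complex numbers such that for every n, X_{ηₙ}(zₙ)² + zₙ·e^{−(zₙ²−1)/(4ηₙ)}·X_{ηₙ}(zₙ) − zₙ² = 0. If (zₙ) converges to z̄ ∈ ℂ, then Re(z̄²) ≤ 1. -/

import Mathlib

open Filter

/-- `X_η(z) = ((1+z)/2)·e^{−(1−z)/(2η)} − ((1−z)/2)·e^{−(1+z)/(2η)}`. -/
noncomputable def X (η : ℝ) (z : ℂ) : ℂ :=
  ((1 + z) / 2) * Complex.exp (-(1 - z) / (2 * (η : ℂ))) -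
    ((1 - z) / 2) * Complex.exp (-(1 + z) / (2 * (η : ℂ)))

set_option maxHeartbeats 1000000

lemma aux (η : ℕ → ℝ) (hηpos : ∀ n, 0 < η n)
    (hη0 : Tendsto η atTop (nhds 0))
    (z : ℕ → ℂ)
    (heq : ∀ n, X (η n) (z n) ^ 2 +
      z n * Complex.exp (-((z n) ^ 2 - 1) / (4 * (η n : ℂ))) * X (η n) (z n) -
      (z n) ^ 2 = 0)
    (zbar : ℂ) (hlim : Tendsto z atTop (nhds zbar))
    (h1 : 1 < zbar.re) (h2 : 1 < (zbar ^ 2).re) : False := by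
  set M : ℝ := ‖zbar‖ + 1 with hMdef
  have hM1 : 1 ≤ M := by
    have := norm_nonneg zbar; simp [hMdef]
  set δ : ℝ := (zbar.re - 1) / 2 with hδdef
  have hδpos : 0 < δ := by simp [hδdef]; linarith
  set δ' : ℝ := ((zbar ^ 2).re - 1) / 2 with hδ'def
  have hδ'pos : 0 < δ' := by simp [hδ'def]; linarith
  set K : ℝ := M + 2 + (1 + M) / 2 with hKdef
  have hKpos : 0 < K := by simp [hKdef]; linarith
  set ε0 : ℝ := min (δ / (2 * K)) (δ' / (4 * M)) with hε0def
  have hMpos : (0:ℝ) < M := by linarith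
  have hε0pos : 0 < ε0 := by
    apply lt_min <;> positivity
  -- eventual facts
  have E1 : ∀ᶠ n in atTop, ‖z n‖ ≤ M := by
    have : Tendsto (fun n => ‖z n‖) atTop (nhds (‖zbar‖)) :=
      (continuous_norm.tendsto zbar).comp hlim
    exact this.eventually_le_const (by simp [hMdef])
  have E2 : ∀ᶠ n in atTop, 1 + δ ≤ (z n).re := by
    have : Tendsto (fun n => (z n).re) atTop (nhds zbar.re) :=
      (Complex.continuous_re.tendsto zbar).comp hlim
    exact this.eventually_const_le (by simp [hδdef]; linarith)
  have E3 : ∀ᶠ n in atTop, 1 + δ' ≤ ((z n) ^ 2).re := by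
    have : Tendsto (fun n => ((z n) ^ 2).re) atTop (nhds ((zbar ^ 2).re)) :=
      (Complex.continuous_re.tendsto _).comp (hlim.pow 2)
    exact this.eventually_const_le (by simp [hδ'def]; linarith)
  have E4 : ∀ᶠ n in atTop, η n ≤ ε0 := hη0.eventually_le_const hε0pos
  have hmin1 : ε0 ≤ δ / (2 * K) := min_le_left _ _
  have hmin2 : ε0 ≤ δ' / (4 * M) := min_le_right _ _
  clear_value M δ δ' K ε0
  obtain ⟨n, ⟨hM', hre⟩, hre2, ht⟩ := ((E1.and E2).and (E3.and E4)).exists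
  set t : ℝ := η n with htdef
  have htpos : 0 < t := hηpos n
  set w : ℂ := z n with hwdef
  -- key re computations
  have h2t : (2 : ℂ) * (t : ℂ) = ((2 * t : ℝ) : ℂ) := by push_cast; ring
  have h4t : (4 : ℂ) * (t : ℂ) = ((4 * t : ℝ) : ℂ) := by push_cast; ring
  have hreA : (-(1 - w) / (2 * (t : ℂ))).re = (w.re - 1) / (2 * t) := by
    rw [h2t, Complex.div_ofReal_re]; simp
  have hreB : (-(1 + w) / (2 * (t : ℂ))).re = (-(1 + w.re)) / (2 * t) := by
    rw [h2t, Complex.div_ofReal_re]; simp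
  have hreC : (-(w ^ 2 - 1) / (4 * (t : ℂ))).re = (1 - (w ^ 2).re) / (4 * t) := by
    rw [h4t, Complex.div_ofReal_re]; simp
  -- bound on b
  set b : ℂ := w * Complex.exp (-(w ^ 2 - 1) / (4 * (t : ℂ))) with hbdef
  have htε1 : t ≤ δ / (2 * K) := ht.trans hmin1
  have htε2 : t ≤ δ' / (4 * M) := ht.trans hmin2
  have hb : ‖b‖ ≤ 1 := by
    have hexpM : M ≤ Real.exp (δ' / (4 * t)) := by
      have h1' : M ≤ δ' / (4 * t) := by
        rw [le_div_iff₀ (by positivity)]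
        have hq : M * t ≤ M * (δ' / (4 * M)) :=
          mul_le_mul_of_nonneg_left htε2 hMpos.le
        have hq2 : M * (δ' / (4 * M)) = δ' / 4 := by field_simp
        calc M * (4 * t) = 4 * (M * t) := by ring
          _ ≤ 4 * (δ' / 4) := by rw [hq2] at hq; linarith
          _ = δ' := by ring
      linarith [Real.add_one_le_exp (δ' / (4 * t))]
    have hexp : Real.exp ((1 - (w ^ 2).re) / (4 * t)) ≤ 1 / M := by
      have hle : (1 - (w ^ 2).re) / (4 * t) ≤ -(δ' / (4 * t)) := by
        rw [← neg_div]
        gcongr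
        linarith
      calc Real.exp ((1 - (w ^ 2).re) / (4 * t)) ≤ Real.exp (-(δ' / (4 * t))) :=
            Real.exp_le_exp.mpr hle
        _ = 1 / Real.exp (δ' / (4 * t)) := by rw [Real.exp_neg, one_div]
        _ ≤ 1 / M := one_div_le_one_div_of_le hMpos hexpM
    calc ‖b‖ = ‖w‖ * Real.exp ((1 - (w ^ 2).re) / (4 * t)) := by
          rw [hbdef, norm_mul, Complex.norm_exp, hreC]
      _ ≤ M * (1 / M) := by
          apply mul_le_mul hM' hexp (Real.exp_nonneg _) (by linarith)
      _ = 1 := by field_simp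
  -- bound on x = X t w
  set A : ℂ := ((1 + w) / 2) * Complex.exp (-(1 - w) / (2 * (t : ℂ))) with hAdef
  set B : ℂ := ((1 - w) / 2) * Complex.exp (-(1 + w) / (2 * (t : ℂ))) with hBdef
  have hXeq : X t w = A - B := rfl
  have hA : K ≤ ‖A‖ := by
    have hKle : K ≤ Real.exp (δ / (2 * t)) := by
      have h1' : K ≤ δ / (2 * t) := by
        rw [le_div_iff₀ (by positivity)]
        have hq : K * t ≤ K * (δ / (2 * K)) :=
          mul_le_mul_of_nonneg_left htε1 hKpos.le
        have hq2 : K * (δ / (2 * K)) = δ / 2 := by field_simp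
        calc K * (2 * t) = 2 * (K * t) := by ring
          _ ≤ 2 * (δ / 2) := by rw [hq2] at hq; linarith
          _ = δ := by ring
      linarith [Real.add_one_le_exp (δ / (2 * t))]
    have habs1 : (1 : ℝ) ≤ ‖(1 + w) / 2‖ := by
      have h1 : (1 + w).re ≤ ‖1 + w‖ := Complex.re_le_norm _
      have h2 : (1 + w).re = 1 + w.re := by simp
      rw [norm_div]
      simp only [Complex.norm_two]
      rw [le_div_iff₀ (by norm_num)]
      linarith
    have hexpA : Real.exp (δ / (2 * t)) ≤ Real.exp ((w.re - 1) / (2 * t)) := by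
      apply Real.exp_le_exp.mpr
      gcongr
      linarith
    calc K ≤ Real.exp (δ / (2 * t)) := hKle
      _ ≤ Real.exp ((w.re - 1) / (2 * t)) := hexpA
      _ = 1 * Real.exp ((w.re - 1) / (2 * t)) := by ring
      _ ≤ ‖(1 + w) / 2‖ * Real.exp ((w.re - 1) / (2 * t)) := by
          apply mul_le_mul_of_nonneg_right habs1 (Real.exp_nonneg _)
      _ = ‖A‖ := by rw [hAdef, norm_mul, Complex.norm_exp, hreA]
  have hB : ‖B‖ ≤ (1 + M) / 2 := by
    have habs1 : ‖(1 - w) / 2‖ ≤ (1 + M) / 2 := by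
      rw [norm_div]
      simp only [Complex.norm_two]
      gcongr ?_ / 2
      have h' : ‖1 - w‖ ≤ ‖(1:ℂ)‖ + ‖-w‖ := by
        rw [sub_eq_add_neg]; exact norm_add_le _ _
      rw [norm_one, norm_neg] at h'
      linarith
    have hexpB : Real.exp ((-(1 + w.re)) / (2 * t)) ≤ 1 := by
      apply Real.exp_le_one_iff.mpr
      apply div_nonpos_of_nonpos_of_nonneg (by linarith) (by positivity)
    calc ‖B‖ = ‖(1 - w) / 2‖ * Real.exp ((-(1 + w.re)) / (2 * t)) := by
          rw [hBdef, norm_mul, Complex.norm_exp, hreB]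
      _ ≤ ((1 + M) / 2) * 1 := by
          apply mul_le_mul habs1 hexpB (Real.exp_nonneg _) (by positivity)
      _ = (1 + M) / 2 := by ring
  have hX : M + 2 ≤ ‖X t w‖ := by
    have h := norm_add_le (A - B) B
    rw [sub_add_cancel] at h
    rw [hXeq]
    have : ‖A‖ - ‖B‖ ≤ ‖A - B‖ := by linarith
    calc M + 2 = K - (1 + M) / 2 := by rw [hKdef]; ring
      _ ≤ ‖A‖ - ‖B‖ := by linarith
      _ ≤ ‖A - B‖ := this
  -- the equation
  set x : ℂ := X t w with hxdef
  have hfac : x * (x + b) = w ^ 2 := by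
    have h := heq n
    rw [← htdef, ← hwdef] at h
    rw [hxdef, hbdef]
    linear_combination h
  have hxb : ‖x‖ - ‖b‖ ≤ ‖x + b‖ := by
    have h := norm_add_le (x + b) (-b)
    rw [add_neg_cancel_right, norm_neg] at h
    linarith
  have habs : ‖w ^ 2‖ = ‖x‖ * ‖x + b‖ := by
    rw [← hfac, norm_mul]
  have hw2 : ‖w ^ 2‖ ≤ M ^ 2 := by
    rw [norm_pow]
    exact pow_le_pow_left₀ (norm_nonneg w) hM' 2
  have hxpos : (0:ℝ) ≤ ‖x + b‖ := norm_nonneg _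
  have hlow : (M + 2) * (M + 1) ≤ ‖x‖ * ‖x + b‖ := by
    apply mul_le_mul hX ?_ (by linarith) (norm_nonneg _)
    linarith
  rw [habs] at hw2
  nlinarith [hw2, hlow, hM1]

lemma X_neg (t : ℝ) (w : ℂ) : X t (-w) = -X t w := by
  unfold X
  ring_nf

theorem stmt_2 (η : ℕ → ℝ) (hηpos : ∀ n, 0 < η n)
    (hη0 : Tendsto η atTop (nhds 0))
    (z : ℕ → ℂ) (hz : ∀ n, z n ≠ 0)
    (heq : ∀ n, X (η n) (z n) ^ 2 +
      z n * Complex.exp (-((z n) ^ 2 - 1) / (4 * (η n : ℂ))) * X (η n) (z n) -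
      (z n) ^ 2 = 0)
    (zbar : ℂ) (hlim : Tendsto z atTop (nhds zbar)) :
    (zbar ^ 2).re ≤ 1 := by
  by_contra hcon
  push_neg at hcon
  have hsq : 1 < zbar.re ^ 2 := by
    have h := Complex.sq_norm zbar
    have : (zbar ^ 2).re = zbar.re ^ 2 - zbar.im ^ 2 := by
      simp [pow_two, Complex.mul_re]
    nlinarith [sq_nonneg zbar.im]
  rcases lt_or_ge 1 zbar.re with hpos | hle
  · exact aux η hηpos hη0 z heq zbar hlim hpos hcon
  · have hneg : 1 < (-zbar).re := by
      rw [Complex.neg_re]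
      nlinarith [sq_nonneg (zbar.re + 1), sq_nonneg (zbar.re - 1)]
    have heq' : ∀ n, X (η n) (-z n) ^ 2 +
        (-z n) * Complex.exp (-((-z n) ^ 2 - 1) / (4 * (η n : ℂ))) * X (η n) (-z n) -
        (-z n) ^ 2 = 0 := by
      intro n
      rw [X_neg]
      have h := heq n
      ring_nf
      ring_nf at h
      linear_combination h
    have hlim' : Tendsto (fun n => -z n) atTop (nhds (-zbar)) := hlim.neg
    have hcon' : 1 < ((-zbar) ^ 2).re := by rwa [neg_pow, Even.neg_one_pow (by norm_num), one_mul]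
    exact aux η hηpos hη0 (fun n => -z n) heq' (-zbar) hlim' hneg hcon'
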